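/- A permutation w ∈ S_n is both 321-avoiding and 2143-avoiding if and only if w or w⁻¹ is Grassmannian (has at most one descent). -/

import Mathlib

/-- `w` avoids the pattern 321. -/
def Avoids321 {n : ℕ} (w : Equiv.Perm (Fin n)) : Prop :=
  ¬ ∃ i j k : Fin n, i < j ∧ j < k ∧ w k < w j ∧ w j < w i

/-- `w` avoids the pattern 2143. -/
def Avoids2143 {n : ℕ} (w : Equiv.Perm (Fin n)) : Prop :=
  ¬ ∃ a b c d : Fin n, a < b ∧ b < c ∧ c < d ∧ w b < w a ∧ w a < w d ∧ w d < w c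

/-- `w` has a descent at (0-indexed) position `i`. -/
def IsDescentAt {n : ℕ} (w : Equiv.Perm (Fin n)) (i : ℕ) : Prop :=
  ∃ h : i + 1 < n, w ⟨i + 1, h⟩ < w ⟨i, Nat.lt_of_succ_lt h⟩

/-- `w` is Grassmannian: it has at most one descent. -/
def Grassmannian {n : ℕ} (w : Equiv.Perm (Fin n)) : Prop :=
  ∀ i j : ℕ, IsDescentAt w i → IsDescentAt w j → i = j

section Aux

variable {n : ℕ}

private lemma mono_aux (w : Equiv.Perm (Fin n)) (i : ℕ) :
    ∀ k, ∀ h : i + k < n,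
      (∀ p, ∀ hp : p + 1 < n, i ≤ p → p < i + k →
        ¬ w ⟨p + 1, hp⟩ < w ⟨p, Nat.lt_of_succ_lt hp⟩) →
      w ⟨i, by omega⟩ ≤ w ⟨i + k, h⟩
  | 0, h, _ => le_refl _
  | (k+1), h, H => by
      have h' : i + k < n := by omega
      have ih := mono_aux w i k h' (fun p hp h1 h2 => H p hp h1 (by omega))
      have h2 := H (i + k) (by omega) (by omega) (by omega)
      push_neg at h2
      exact le_trans ih h2

private lemma exists_descent (w : Equiv.Perm (Fin n)) {i j : Fin n}
    (hij : i < j) (hv : w j < w i) :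
    ∃ p, ∃ hp : p + 1 < n, i.val ≤ p ∧ p < j.val ∧
      w ⟨p + 1, hp⟩ < w ⟨p, Nat.lt_of_succ_lt hp⟩ := by
  by_contra hC
  push_neg at hC
  have hj : j.val < n := j.isLt
  have hij' : i.val < j.val := hij
  have key := mono_aux w i.val (j.val - i.val) (by omega)
    (fun p hp h1 h2 => not_lt.mpr (hC p hp h1 (by omega)))
  have e0 : (⟨i.val, by omega⟩ : Fin n) = i := Fin.ext rfl
  have e : (⟨i.val + (j.val - i.val), by omega⟩ : Fin n) = j := Fin.ext (by simp; omega)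
  rw [e0, e] at key
  exact absurd hv (not_lt.mpr key)

private lemma grass_avoids321 (w : Equiv.Perm (Fin n)) (hg : Grassmannian w) :
    Avoids321 w := by
  rintro ⟨i, j, k, hij, hjk, h1, h2⟩
  obtain ⟨p1, hp1, hip1, hp1j, d1⟩ := exists_descent w hij h2
  obtain ⟨p2, hp2, hjp2, hp2k, d2⟩ := exists_descent w hjk h1
  have := hg p1 p2 ⟨hp1, d1⟩ ⟨hp2, d2⟩
  omega

private lemma grass_avoids2143 (w : Equiv.Perm (Fin n)) (hg : Grassmannian w) :
    Avoids2143 w := by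
  rintro ⟨a, b, c, d, hab, hbc, hcd, h1, h2, h3⟩
  obtain ⟨p1, hp1, hip1, hp1j, d1⟩ := exists_descent w hab h1
  obtain ⟨p2, hp2, hjp2, hp2k, d2⟩ := exists_descent w hcd h3
  have hbc' : b.val < c.val := hbc
  have := hg p1 p2 ⟨hp1, d1⟩ ⟨hp2, d2⟩
  omega

private lemma avoids321_inv {w : Equiv.Perm (Fin n)} (h : Avoids321 w) :
    Avoids321 w⁻¹ := by
  rintro ⟨i, j, k, hij, hjk, h1, h2⟩
  exact h ⟨w⁻¹ k, w⁻¹ j, w⁻¹ i, h1, h2, by simpa using hij, by simpa using hjk⟩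

private lemma avoids2143_inv {w : Equiv.Perm (Fin n)} (h : Avoids2143 w) :
    Avoids2143 w⁻¹ := by
  rintro ⟨a, b, c, d, hab, hbc, hcd, h1, h2, h3⟩
  exact h ⟨w⁻¹ b, w⁻¹ a, w⁻¹ d, w⁻¹ c, h1, h2, h3,
    by simpa using hab, by simpa using hbc, by simpa using hcd⟩

/-- Two descents `p < q` in a permutation avoiding 321 and 2143 force
`q ≥ p+2` and `w(p+1) < w(q+1) < w(p) < w(q)`. -/
private lemma stepA (w : Equiv.Perm (Fin n)) (h3 : Avoids321 w) (h2 : Avoids2143 w)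
    {p q : ℕ} (hp : p + 1 < n) (hq : q + 1 < n) (hpq : p < q)
    (dp : w ⟨p + 1, hp⟩ < w ⟨p, Nat.lt_of_succ_lt hp⟩)
    (dq : w ⟨q + 1, hq⟩ < w ⟨q, Nat.lt_of_succ_lt hq⟩) :
    p + 2 ≤ q ∧
    w ⟨p, Nat.lt_of_succ_lt hp⟩ < w ⟨q, Nat.lt_of_succ_lt hq⟩ ∧
    w ⟨p + 1, hp⟩ < w ⟨q + 1, hq⟩ ∧
    w ⟨q + 1, hq⟩ < w ⟨p, Nat.lt_of_succ_lt hp⟩ := by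
  have hq2 : p + 2 ≤ q := by
    by_contra hcon
    have hqe : q = p + 1 := by omega
    subst hqe
    exact h3 ⟨⟨p, by omega⟩, ⟨p+1, by omega⟩, ⟨p+2, by omega⟩,
      Fin.mk_lt_mk.mpr (by omega), Fin.mk_lt_mk.mpr (by omega), dq, dp⟩
  have hAC : w ⟨p, Nat.lt_of_succ_lt hp⟩ < w ⟨q, Nat.lt_of_succ_lt hq⟩ := by
    rcases lt_trichotomy (w ⟨p, Nat.lt_of_succ_lt hp⟩) (w ⟨q, Nat.lt_of_succ_lt hq⟩)
      with h | h | h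
    · exact h
    · exfalso
      have := w.injective h
      simp [Fin.mk.injEq] at this
      omega
    · exact absurd (h3 ⟨⟨p, by omega⟩, ⟨q, by omega⟩, ⟨q+1, hq⟩,
        Fin.mk_lt_mk.mpr (by omega), Fin.mk_lt_mk.mpr (by omega), dq, h⟩) (by simp)
  have hBD : w ⟨p + 1, hp⟩ < w ⟨q + 1, hq⟩ := by
    rcases lt_trichotomy (w ⟨p + 1, hp⟩) (w ⟨q + 1, hq⟩) with h | h | h
    · exact h
    · exfalso
      have := w.injective h
      simp [Fin.mk.injEq] at this
      omega
    · exact absurd (h3 ⟨⟨p, by omega⟩, ⟨p+1, hp⟩, ⟨q+1, hq⟩,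
        Fin.mk_lt_mk.mpr (by omega), Fin.mk_lt_mk.mpr (by omega), h, dp⟩) (by simp)
  have hDA : w ⟨q + 1, hq⟩ < w ⟨p, Nat.lt_of_succ_lt hp⟩ := by
    rcases lt_trichotomy (w ⟨q + 1, hq⟩) (w ⟨p, Nat.lt_of_succ_lt hp⟩) with h | h | h
    · exact h
    · exfalso
      have := w.injective h
      simp [Fin.mk.injEq] at this
      omega
    · exact absurd (h2 ⟨⟨p, by omega⟩, ⟨p+1, hp⟩, ⟨q, by omega⟩, ⟨q+1, hq⟩,
        Fin.mk_lt_mk.mpr (by omega), Fin.mk_lt_mk.mpr (by omega),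
        Fin.mk_lt_mk.mpr (by omega), dp, h, dq⟩) (by simp)
  exact ⟨hq2, hAC, hBD, hDA⟩

/-- Core contradiction: `w` avoids both patterns, yet both `w` and `w⁻¹` have
two descents. -/
private lemma key (w : Equiv.Perm (Fin n)) (h3 : Avoids321 w) (h2 : Avoids2143 w)
    {p q u v : ℕ} (hp : p + 1 < n) (hq : q + 1 < n) (hu : u + 1 < n) (hv : v + 1 < n)
    (hpq : p < q) (huv : u < v)
    (dp : w ⟨p + 1, hp⟩ < w ⟨p, Nat.lt_of_succ_lt hp⟩)
    (dq : w ⟨q + 1, hq⟩ < w ⟨q, Nat.lt_of_succ_lt hq⟩)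
    (du : w⁻¹ ⟨u + 1, hu⟩ < w⁻¹ ⟨u, Nat.lt_of_succ_lt hu⟩)
    (dv : w⁻¹ ⟨v + 1, hv⟩ < w⁻¹ ⟨v, Nat.lt_of_succ_lt hv⟩) : False := by
  obtain ⟨hq2, hAC, hBD, hDA⟩ := stepA w h3 h2 hp hq hpq dp dq
  obtain ⟨hv2, hcd, hab, hbc⟩ :=
    stepA w⁻¹ (avoids321_inv h3) (avoids2143_inv h2) hu hv huv du dv
  set P : Fin n := ⟨p, Nat.lt_of_succ_lt hp⟩ with hP
  set P1 : Fin n := ⟨p + 1, hp⟩ with hP1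
  set Q : Fin n := ⟨q, Nat.lt_of_succ_lt hq⟩ with hQ
  set Q1 : Fin n := ⟨q + 1, hq⟩ with hQ1
  set U : Fin n := ⟨u, Nat.lt_of_succ_lt hu⟩ with hU
  set U1 : Fin n := ⟨u + 1, hu⟩ with hU1
  set V : Fin n := ⟨v, Nat.lt_of_succ_lt hv⟩ with hV
  set V1 : Fin n := ⟨v + 1, hv⟩ with hV1
  set a : Fin n := w⁻¹ U1 with ha
  set b : Fin n := w⁻¹ V1 with hb
  set c : Fin n := w⁻¹ U with hc
  set d : Fin n := w⁻¹ V with hd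
  have wa : w a = U1 := by rw [ha]; exact w.apply_symm_apply U1
  have wb : w b = V1 := by rw [hb]; exact w.apply_symm_apply V1
  have wc : w c = U := by rw [hc]; exact w.apply_symm_apply U
  have wd : w d = V := by rw [hd]; exact w.apply_symm_apply V
  have hPP1 : P < P1 := by rw [hP, hP1]; exact Fin.mk_lt_mk.mpr (by omega)
  have hQQ1 : Q < Q1 := by rw [hQ, hQ1]; exact Fin.mk_lt_mk.mpr (by omega)
  have hP1Q : P1 < Q := by rw [hP1, hQ]; exact Fin.mk_lt_mk.mpr (by omega)
  have hPQ : P < Q := by rw [hP, hQ]; exact Fin.mk_lt_mk.mpr (by omega)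
  have hUU1 : U < U1 := by rw [hU, hU1]; exact Fin.mk_lt_mk.mpr (by omega)
  have hVV1 : V < V1 := by rw [hV, hV1]; exact Fin.mk_lt_mk.mpr (by omega)
  have hU1V : U1 < V := by rw [hU1, hV]; exact Fin.mk_lt_mk.mpr (by omega)
  -- Case 1: U < w P1  (value u below the descent-top B)
  rcases lt_or_ge U (w P1) with hUB | hBU
  · rcases lt_trichotomy c P1 with hc1 | hc1 | hc1
    · -- c ≤ P : 2143 at (a, c, Q, Q1)
      have hcQ : c < Q := by
        have h1 : c.val < p + 1 := hc1
        have h2' : (Q : Fin n).val = q := rfl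
        exact Fin.lt_def.mpr (by omega)
      have hU1D : U1 ≤ w P1 := Fin.le_def.mpr hUB
      exact h2 ⟨a, c, Q, Q1, du, hcQ, hQQ1,
        by rw [wc, wa]; exact hUU1,
        by rw [wa]; exact lt_of_le_of_lt hU1D hBD, dq⟩
    · -- c = P1 : contradiction U = w P1
      have : U = w P1 := by rw [← wc, hc1]
      exact absurd this (ne_of_lt hUB)
    · -- P1 < c : 321 at (P, P1, c)
      exact h3 ⟨P, P1, c, hPP1, hc1, by rw [wc]; exact hUB, dp⟩
  -- Case 2: w Q ≤ V  (value v above the descent-top C)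
  rcases le_or_gt (w Q) V with hCV | hVC
  · rcases lt_trichotomy b Q with hbQ | hbQ | hbQ
    · -- b < Q : 321 at (b, Q, Q1)
      exact h3 ⟨b, Q, Q1, hbQ, hQQ1, dq,
        by rw [wb]; exact lt_of_le_of_lt hCV hVV1⟩
    · -- b = Q : contradiction
      have : w Q = V1 := by rw [← hbQ, wb]
      rw [this] at hCV
      exact absurd hCV (not_le.mpr hVV1)
    · -- Q < b : 2143 at (P, P1, b, d)
      exact h2 ⟨P, P1, b, d, hPP1, lt_trans hP1Q hbQ, dv,
        dp, by rw [wd]; exact lt_of_lt_of_le hAC hCV,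
        by rw [wd, wb]; exact hVV1⟩
  -- Case 3: P < a
  rcases lt_or_ge P a with haP | haP
  · rcases lt_trichotomy a P1 with ha1 | ha1 | ha1
    · -- impossible: P < a < P1
      have h1 : p < a.val := haP
      have h2' : a.val < p + 1 := ha1
      omega
    · -- a = P1 : contradiction with w P1 ≤ U
      have : w P1 = U1 := by rw [← ha1, wa]
      rw [this] at hBU
      exact absurd hBU (not_le.mpr hUU1)
    · -- P1 < a
      rcases lt_trichotomy U1 (w P) with h4 | h4 | h4
      · -- U1 < w P : 321 at (P, a, c)
        exact h3 ⟨P, a, c, haP, du, by rw [wc, wa]; exact hUU1,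
          by rw [wa]; exact h4⟩
      · -- U1 = w P : a = P, contra
        have : a = P := by rw [ha, h4]; exact w.symm_apply_apply P
        rw [this] at haP
        exact absurd haP (lt_irrefl _)
      · -- w P < U1 : then w P < U (since w P ≠ U), 2143 at (P, P1, a, c)
        have hAU : w P < U := by
          rcases lt_trichotomy (w P) U with h5 | h5 | h5
          · exact h5
          · exfalso
            have : c = P := by rw [hc, ← h5]; exact w.symm_apply_apply P
            have h6 : P1 < c := lt_trans ha1 (lt_trans hab hbc)
            rw [this] at h6
            exact absurd (lt_trans hPP1 h6) (lt_irrefl _)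
          · exfalso
            have h6 : (w P).val < u + 1 := h4
            have h7 : u < (w P).val := h5
            omega
        exact h2 ⟨P, P1, a, c, hPP1, ha1, du, dp,
          by rw [wc]; exact hAU, by rw [wc, wa]; exact hUU1⟩
  -- Case 4: d ≤ Q
  rcases lt_or_ge Q d with hdQ | hdQ
  · -- Main case: 2143 at (a, P1, Q, d)
    exact h2 ⟨a, P1, Q, d, lt_of_le_of_lt haP hPP1, hP1Q, hdQ,
      by rw [wa]; exact lt_of_le_of_lt hBU hUU1,
      by rw [wa, wd]; exact hU1V,
      by rw [wd]; exact hVC⟩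
  · rcases lt_or_eq_of_le hdQ with hd1 | hd1
    · -- d < Q
      rcases lt_trichotomy V (w Q1) with h5 | h5 | h5
      · -- V < w Q1 : then V1 < w Q1 (V1 ≠ w Q1), 2143 at (b, d, Q, Q1)
        have hV1D : V1 < w Q1 := by
          rcases lt_trichotomy V1 (w Q1) with h6 | h6 | h6
          · exact h6
          · exfalso
            have : b = Q1 := by rw [hb, h6]; exact w.symm_apply_apply Q1
            have h7 : b < Q1 := lt_trans (lt_trans hbc hcd) (lt_trans hd1 hQQ1)
            rw [this] at h7
            exact absurd h7 (lt_irrefl _)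
          · exfalso
            have h6 : (w Q1).val < v + 1 := h6
            have h7 : v < (w Q1).val := h5
            omega
        exact h2 ⟨b, d, Q, Q1, hbc.trans hcd, hd1, hQQ1,
          by rw [wd, wb]; exact hVV1, by rw [wb]; exact hV1D, dq⟩
      · -- V = w Q1 : d = Q1, contra d < Q
        have : d = Q1 := by rw [hd, h5]; exact w.symm_apply_apply Q1
        rw [this] at hd1
        exact absurd (lt_trans hQQ1 hd1) (lt_irrefl _)
      · -- w Q1 < V : 321 at (b, d, Q1)
        exact h3 ⟨b, d, Q1, hbc.trans hcd, lt_trans hd1 hQQ1,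
          by rw [wd]; exact h5, by rw [wd, wb]; exact hVV1⟩
    · -- d = Q : contradiction V = w Q with V < w Q
      have : V = w Q := by rw [← wd, hd1]
      rw [this] at hVC
      exact absurd hVC (lt_irrefl _)

end Aux

/-- A permutation `w ∈ S_n` is both 321-avoiding and 2143-avoiding if and only if
`w` or `w⁻¹` is Grassmannian. -/
theorem stmt11 {n : ℕ} (w : Equiv.Perm (Fin n)) :
    (Avoids321 w ∧ Avoids2143 w) ↔ (Grassmannian w ∨ Grassmannian w⁻¹) := by
  constructor
  · rintro ⟨h3, h2⟩
    by_cases hg : Grassmannian w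
    · exact Or.inl hg
    · refine Or.inr ?_
      intro i j di dj
      by_contra hij
      unfold Grassmannian at hg
      push_neg at hg
      obtain ⟨p0, q0, dp0, dq0, hne⟩ := hg
      obtain ⟨hp0, dp0'⟩ := dp0
      obtain ⟨hq0, dq0'⟩ := dq0
      obtain ⟨hi, di'⟩ := di
      obtain ⟨hj, dj'⟩ := dj
      rcases Ne.lt_or_gt hne with h1 | h1 <;> rcases Ne.lt_or_gt hij with h2' | h2'
      · exact key w h3 h2 hp0 hq0 hi hj h1 h2' dp0' dq0' di' dj'
      · exact key w h3 h2 hp0 hq0 hj hi h1 h2' dp0' dq0' dj' di'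
      · exact key w h3 h2 hq0 hp0 hi hj h1 h2' dq0' dp0' di' dj'
      · exact key w h3 h2 hq0 hp0 hj hi h1 h2' dq0' dp0' dj' di'
  · rintro (hg | hg)
    · exact ⟨grass_avoids321 w hg, grass_avoids2143 w hg⟩
    · have h3 := avoids321_inv (grass_avoids321 w⁻¹ hg)
      have h2 := avoids2143_inv (grass_avoids2143 w⁻¹ hg)
      rw [inv_inv] at h3 h2
      exact ⟨h3, h2⟩
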